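/- Let s ≥ 2, 2 ≤ m ≤ s−1, and ρ > 0. Suppose sρ·π_{ρ,m+1} < s−m and ρ ≥ ((s−m)(s+1))/((s−m+1)s). Then sρ·π_{ρ,m} < s−m+1. -/

import Mathlib

noncomputable def erlangB (s : ℕ) (ρ : ℝ) (m : ℕ) : ℝ :=
  ((s * ρ) ^ (m - 1) / (Nat.factorial (m - 1) : ℝ))
    / (∑ i ∈ Finset.range m, (s * ρ) ^ i / (Nat.factorial i : ℝ))

/-- induction step: if `sρπ_{ρ,m+1} < s−m` and `ρ ≥ ((s−m)(s+1))/((s−m+1)s)`,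
then `sρπ_{ρ,m} < s−m+1`. -/
theorem stmt_12 (s m : ℕ) (hs : 2 ≤ s) (hm2 : 2 ≤ m) (hm : m ≤ s - 1)
    (ρ : ℝ) (hρ : 0 < ρ)
    (h1 : s * ρ * erlangB s ρ (m + 1) < (s : ℝ) - m)
    (h2 : ρ ≥ (((s : ℝ) - m) * ((s : ℝ) + 1)) / ((((s : ℝ) - m + 1)) * s)) :
    s * ρ * erlangB s ρ m < (s : ℝ) - m + 1 := by
  have hm1 : 1 ≤ m := le_trans (by norm_num) hm2
  have hm1' : m - 1 + 1 = m := Nat.succ_pred_eq_of_pos hm1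
  have hms : m + 1 ≤ s := by omega
  have hsR : (0:ℝ) < s := by
    have : (2:ℝ) ≤ s := by exact_mod_cast hs
    linarith
  have hc : (0:ℝ) < s * ρ := mul_pos hsR hρ
  set c : ℝ := (s : ℝ) * ρ with hcdef
  set k : ℝ := (s : ℝ) - m with hkdef
  have hk : 1 ≤ k := by
    have : (m:ℝ) + 1 ≤ s := by exact_mod_cast hms
    simp [hkdef]; linarith
  have hsk : (s : ℝ) = (m : ℝ) + k := by simp [hkdef]
  have hmR : (2:ℝ) ≤ (m:ℝ) := by exact_mod_cast hm2
  set B := ∑ i ∈ Finset.range m, c ^ i / (Nat.factorial i : ℝ) with hBdef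
  have hB : 0 < B :=
    Finset.sum_pos (fun i _ => by positivity) ⟨0, Finset.mem_range.2 (by omega)⟩
  set A : ℝ := c ^ (m - 1) / (Nat.factorial (m - 1) : ℝ) with hAdef
  have hA : 0 < A := by positivity
  set D : ℝ := c ^ m / (Nat.factorial m : ℝ) with hDdef
  have hD : 0 < D := by positivity
  -- key identity: c * A = m * D
  have hfact : (Nat.factorial m : ℝ) = (m : ℝ) * (Nat.factorial (m - 1) : ℝ) := by
    have h := Nat.factorial_succ (m - 1)
    rw [hm1'] at h
    rw [h]
    push_cast [hm1']
    ring
  have hpow : c ^ m = c * c ^ (m - 1) := by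
    conv_lhs => rw [← hm1']
    rw [pow_succ]; ring
  have hCAD : c * A = (m : ℝ) * D := by
    rw [hAdef, hDdef, hfact, hpow]
    have h1 : (Nat.factorial (m-1) : ℝ) ≠ 0 := by positivity
    have h2 : (m : ℝ) ≠ 0 := by positivity
    field_simp
  -- rewrite erlangB values
  have hEm : erlangB s ρ m = A / B := rfl
  have hEm1 : erlangB s ρ (m + 1) = D / (B + D) := by
    simp only [erlangB, Nat.add_sub_cancel, ← hcdef, ← hDdef,
      Finset.sum_range_succ, ← hBdef]
  rw [hEm1] at h1
  rw [hEm]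
  have hBD : 0 < B + D := by linarith
  -- clear denominators in h1
  have h1' : c * D < k * (B + D) := by
    rw [← mul_div_assoc, div_lt_iff₀ hBD] at h1
    linarith
  -- clear denominators in h2
  have hden : 0 < (k + 1) * s := by positivity
  have h2' : k * ((m : ℝ) + k + 1) ≤ c * (k + 1) := by
    rw [ge_iff_le, div_le_iff₀ hden] at h2
    nlinarith [hsk]
  -- goal: c * (A / B) < k + 1, i.e. c * A < (k+1) * B, i.e. m * D < (k+1) * B
  rw [← mul_div_assoc, div_lt_iff₀ hB, hCAD]
  nlinarith [mul_pos hD hB, mul_nonneg (sub_nonneg.2 h2') hD.le, hk, hmR, hD, hB]
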